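/- Let δ > 0 and let f : (0,∞) → ℝ be continuous with |f(t)| ≤ c·e^{-δ t} for t ≥ 1 and |f(t)| ≤ c·e^{-δ/t} for 0 < t ≤ 1. If ∫₀^∞ f(t)·t^{-m} dt = 0 for every integer m ≥ 0, then f ≡ 0 on (0,∞). -/

import Mathlib

open MeasureTheory Set

lemma pow_le_factorial_mul_exp (x : ℝ) (hx : 0 ≤ x) (m : ℕ) :
    x ^ m ≤ m.factorial * Real.exp x := by
  have h1 : x ^ m / m.factorial ≤ Real.exp x := by
    calc x ^ m / m.factorial
        ≤ ∑ i ∈ Finset.range (m+1), x ^ i / i.factorial := by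
          refine Finset.single_le_sum (f := fun i => x ^ i / i.factorial) ?_
            (Finset.self_mem_range_succ m)
          intro i _; positivity
      _ ≤ Real.exp x := Real.sum_le_exp_of_nonneg hx _
  have hm : (0:ℝ) < m.factorial := by positivity
  rw [div_le_iff₀ hm] at h1
  linarith

lemma kernel_contOn {f : ℝ → ℝ} (hf : ContinuousOn f (Set.Ioi 0)) (r : ℝ) (m : ℕ) :
    ContinuousOn (fun t => f t * Real.exp (r / t) * t ^ (-(m:ℝ))) (Set.Ioi 0) := by
  apply ContinuousOn.mul
  · apply hf.mul
    apply Real.continuous_exp.comp_continuousOn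
    exact continuousOn_const.div continuousOn_id (fun t ht => ne_of_gt ht)
  · intro t ht
    exact (Real.continuousAt_rpow_const t _ (Or.inl (ne_of_gt ht))).continuousWithinAt

lemma masterInt {δ c : ℝ} (hδ : 0 < δ) {f : ℝ → ℝ}
    (hf : ContinuousOn f (Set.Ioi 0))
    (h1 : ∀ t : ℝ, 1 ≤ t → |f t| ≤ c * Real.exp (-δ * t))
    (h2 : ∀ t : ℝ, 0 < t → t ≤ 1 → |f t| ≤ c * Real.exp (-δ / t))
    (r : ℝ) (hr : r < δ) (m : ℕ) :
    IntegrableOn (fun t => f t * Real.exp (r / t) * t ^ (-(m:ℝ))) (Set.Ioi 0) := by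
  have hc : 0 ≤ c := by
    nlinarith [Real.exp_pos (-δ * 1), abs_nonneg (f 1), h1 1 le_rfl]
  have hmeas : AEStronglyMeasurable (fun t => f t * Real.exp (r / t) * t ^ (-(m:ℝ)))
      (volume.restrict (Set.Ioi (0:ℝ))) :=
    (kernel_contOn hf r m).aestronglyMeasurable measurableSet_Ioi
  rw [show Set.Ioi (0:ℝ) = Set.Ioc 0 1 ∪ Set.Ioi 1 from (Set.Ioc_union_Ioi_eq_Ioi zero_le_one).symm]
  apply IntegrableOn.union
  · -- on Ioc 0 1
    set ε := δ - r with hε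
    have hεpos : 0 < ε := by simp [hε]; linarith
    refine Integrable.mono' (g := fun _ => c * (m.factorial / ε ^ m))
      (integrableOn_const measure_Ioc_lt_top.ne) (hmeas.mono_measure
        (Measure.restrict_mono Set.Ioc_subset_Ioi_self le_rfl)) ?_
    filter_upwards [ae_restrict_mem measurableSet_Ioc] with t ht
    have ht0 : 0 < t := ht.1
    have hrp : (0:ℝ) < t ^ (-(m:ℝ)) := Real.rpow_pos_of_pos ht0 _
    have hb : |f t| ≤ c * Real.exp (-δ / t) := h2 t ht0 ht.2
    have key : Real.exp (-δ / t) * Real.exp (r / t) * t ^ (-(m:ℝ)) ≤ m.factorial / ε ^ m := by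
      rw [← Real.exp_add]
      have e1 : -δ / t + r / t = -(ε / t) := by rw [hε]; ring
      rw [e1]
      have hu : (0:ℝ) < 1/t := by positivity
      have hrpow : t ^ (-(m:ℝ)) = (1/t) ^ m := by
        rw [Real.rpow_neg ht0.le, Real.rpow_natCast, one_div, inv_pow]
      rw [hrpow]
      have hple := pow_le_factorial_mul_exp (ε * (1/t)) (by positivity) m
      have hexp : Real.exp (-(ε/t)) = (Real.exp (ε * (1/t)))⁻¹ := by
        rw [← Real.exp_neg]; ring_nf
      rw [hexp]
      rw [mul_pow] at hple
      have hepos : (0:ℝ) < Real.exp (ε * (1/t)) := Real.exp_pos _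
      have hem : (0:ℝ) < ε ^ m := by positivity
      rw [inv_mul_le_iff₀ hepos, mul_div_assoc', le_div_iff₀ hem]
      nlinarith
    calc ‖f t * Real.exp (r / t) * t ^ (-(m:ℝ))‖
        = |f t| * Real.exp (r / t) * t ^ (-(m:ℝ)) := by
          rw [Real.norm_eq_abs, abs_mul, abs_mul, abs_of_pos (Real.exp_pos _), abs_of_pos hrp]
      _ ≤ (c * Real.exp (-δ / t)) * Real.exp (r / t) * t ^ (-(m:ℝ)) := by
          apply mul_le_mul_of_nonneg_right (mul_le_mul_of_nonneg_right hb (Real.exp_pos _).le) hrp.le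
      _ = c * (Real.exp (-δ / t) * Real.exp (r / t) * t ^ (-(m:ℝ))) := by ring
      _ ≤ c * (m.factorial / ε ^ m) := mul_le_mul_of_nonneg_left key hc
  · -- on Ioi 1
    refine Integrable.mono' (g := fun t => (c * Real.exp |r|) * Real.exp (-δ * t))
      ((exp_neg_integrableOn_Ioi 1 hδ).const_mul _) (hmeas.mono_measure
        (Measure.restrict_mono (Set.Ioi_subset_Ioi zero_le_one) le_rfl)) ?_
    filter_upwards [ae_restrict_mem measurableSet_Ioi] with t ht
    have ht1 : (1:ℝ) ≤ t := le_of_lt ht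
    have ht0 : (0:ℝ) < t := lt_of_lt_of_le zero_lt_one ht1
    have hrp : (0:ℝ) < t ^ (-(m:ℝ)) := Real.rpow_pos_of_pos ht0 _
    have hrple : t ^ (-(m:ℝ)) ≤ 1 :=
      Real.rpow_le_one_of_one_le_of_nonpos ht1 (neg_nonpos.2 (Nat.cast_nonneg m))
    have hexple : Real.exp (r / t) ≤ Real.exp |r| := by
      apply Real.exp_le_exp.2
      calc r / t ≤ |r| / t := by gcongr; exact le_abs_self r
        _ ≤ |r| := by rw [div_le_iff₀ ht0]; nlinarith [abs_nonneg r]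
    calc ‖f t * Real.exp (r / t) * t ^ (-(m:ℝ))‖
        = |f t| * Real.exp (r / t) * t ^ (-(m:ℝ)) := by
          rw [Real.norm_eq_abs, abs_mul, abs_mul, abs_of_pos (Real.exp_pos _), abs_of_pos hrp]
      _ ≤ (c * Real.exp (-δ * t)) * Real.exp |r| * 1 := by
          apply mul_le_mul ?_ hrple hrp.le
            (mul_nonneg (mul_nonneg hc (Real.exp_pos _).le) (Real.exp_pos _).le)
          exact mul_le_mul (h1 t ht1) hexple (Real.exp_pos _).le
            (mul_nonneg hc (Real.exp_pos _).le)
      _ = (c * Real.exp |r|) * Real.exp (-δ * t) := by ring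

lemma seriesStep {δ c : ℝ} (hδ : 0 < δ) {f : ℝ → ℝ}
    (hf : ContinuousOn f (Set.Ioi 0))
    (h1 : ∀ t : ℝ, 1 ≤ t → |f t| ≤ c * Real.exp (-δ * t))
    (h2 : ∀ t : ℝ, 0 < t → t ≤ 1 → |f t| ≤ c * Real.exp (-δ / t))
    (s a : ℝ) (hs : 0 ≤ s) (ha : 0 ≤ a) (haδ : a < δ)
    (hm : ∀ m : ℕ, ∫ t in Set.Ioi (0:ℝ), f t * Real.exp (-s / t) * t ^ (-(m:ℝ)) = 0)
    (m : ℕ) :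
    ∫ t in Set.Ioi (0:ℝ), f t * Real.exp (-(s + a) / t) * t ^ (-(m:ℝ)) = 0 := by
  set F : ℕ → ℝ → ℝ := fun k t =>
    ((-a)^k / k.factorial) * (f t * Real.exp (-s/t) * t ^ (-((m+k : ℕ):ℝ))) with hF
  have hFmeas : ∀ k, AEStronglyMeasurable (F k) (volume.restrict (Set.Ioi (0:ℝ))) := fun k =>
    (((kernel_contOn hf (-s) (m+k)).aestronglyMeasurable measurableSet_Ioi).const_mul _)
  -- pointwise norm computation
  have hnorm : ∀ t : ℝ, 0 < t → ∀ k : ℕ, ‖F k t‖ =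
      (|f t| * Real.exp (-s/t) * t ^ (-(m:ℝ))) * ((a/t)^k / k.factorial) := by
    intro t ht k
    have hsplit : t ^ (-((m+k : ℕ):ℝ)) = t ^ (-(m:ℝ)) * (t⁻¹)^k := by
      rw [Nat.cast_add, neg_add, Real.rpow_add ht, Real.rpow_neg ht.le (k:ℝ),
        Real.rpow_natCast, inv_pow]
    rw [hF]
    simp only [Real.norm_eq_abs, abs_mul, abs_div, abs_pow, abs_neg, abs_of_nonneg ha,
      abs_of_pos (Real.exp_pos _), abs_of_pos (Real.rpow_pos_of_pos ht _),
      Nat.abs_cast, hsplit]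
    rw [abs_of_pos (inv_pos.2 ht)]
    field_simp
    ring
  have hptsum : ∀ t : ℝ, 0 < t →
      ∑' k, F k t = f t * Real.exp (-(s + a) / t) * t ^ (-(m:ℝ)) := by
    intro t ht
    have hrw : ∀ k : ℕ, F k t =
        (f t * Real.exp (-s/t) * t ^ (-(m:ℝ))) * ((-a/t)^k / k.factorial) := by
      intro k
      have hsplit : t ^ (-((m+k : ℕ):ℝ)) = t ^ (-(m:ℝ)) * (t⁻¹)^k := by
        rw [Nat.cast_add, neg_add, Real.rpow_add ht, Real.rpow_neg ht.le (k:ℝ),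
          Real.rpow_natCast, inv_pow]
      rw [hF]
      simp only [hsplit, div_pow]
      ring
    calc ∑' k, F k t
        = ∑' k : ℕ, (f t * Real.exp (-s/t) * t ^ (-(m:ℝ))) * ((-a/t)^k / k.factorial) :=
          tsum_congr hrw
      _ = (f t * Real.exp (-s/t) * t ^ (-(m:ℝ))) * ∑' k : ℕ, ((-a/t)^k / k.factorial) :=
          tsum_mul_left
      _ = (f t * Real.exp (-s/t) * t ^ (-(m:ℝ))) * Real.exp (-a/t) := by
          rw [Real.exp_eq_exp_ℝ, NormedSpace.exp_eq_tsum_div]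
      _ = f t * Real.exp (-(s + a) / t) * t ^ (-(m:ℝ)) := by
          rw [mul_comm (f t * Real.exp (-s/t) * t ^ (-(m:ℝ)))]
          rw [show (-(s+a))/t = -s/t + -a/t by ring, Real.exp_add]
          ring
  -- the summability condition
  have hG : IntegrableOn (fun t => f t * Real.exp ((a - s) / t) * t ^ (-(m:ℝ)))
      (Set.Ioi (0:ℝ)) := masterInt hδ hf h1 h2 (a - s) (by linarith) m
  have hGfin : ∫⁻ t in Set.Ioi (0:ℝ),
      ‖f t * Real.exp ((a - s) / t) * t ^ (-(m:ℝ))‖₊ < ⊤ := hG.2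
  have hcond : ∑' k, ∫⁻ t in Set.Ioi (0:ℝ), ‖F k t‖₊ ≠ ⊤ := by
    rw [← lintegral_tsum (fun k => (hFmeas k).aemeasurable.nnnorm.coe_nnreal_ennreal)]
    have heq : ∫⁻ t in Set.Ioi (0:ℝ), ∑' k, (‖F k t‖₊ : ENNReal)
        = ∫⁻ t in Set.Ioi (0:ℝ), ‖f t * Real.exp ((a - s) / t) * t ^ (-(m:ℝ))‖₊ := by
      apply lintegral_congr_ae
      filter_upwards [ae_restrict_mem measurableSet_Ioi] with t ht
      have ht0 : 0 < t := ht
      have hsummable : Summable (fun k : ℕ => ‖F k t‖) := by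
        rw [summable_congr (hnorm t ht0)]
        exact (Real.summable_pow_div_factorial (a/t)).mul_left _
      calc ∑' k, (‖F k t‖₊ : ENNReal)
          = ∑' k, ENNReal.ofReal ‖F k t‖ := by
            refine tsum_congr fun k => (ofReal_norm _).symm
        _ = ENNReal.ofReal (∑' k, ‖F k t‖) :=
            (ENNReal.ofReal_tsum_of_nonneg (fun k => norm_nonneg _) hsummable).symm
        _ = ENNReal.ofReal (|f t| * Real.exp ((a - s)/t) * t ^ (-(m:ℝ))) := by
            congr 1
            calc ∑' k, ‖F k t‖
                = ∑' k : ℕ, (|f t| * Real.exp (-s/t) * t ^ (-(m:ℝ))) * ((a/t)^k / k.factorial) :=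
                  tsum_congr (hnorm t ht0)
              _ = (|f t| * Real.exp (-s/t) * t ^ (-(m:ℝ))) * ∑' k : ℕ, ((a/t)^k / k.factorial) :=
                  tsum_mul_left
              _ = (|f t| * Real.exp (-s/t) * t ^ (-(m:ℝ))) * Real.exp (a/t) := by
                  rw [Real.exp_eq_exp_ℝ, NormedSpace.exp_eq_tsum_div]
              _ = |f t| * Real.exp ((a - s)/t) * t ^ (-(m:ℝ)) := by
                  rw [show (a - s)/t = -s/t + a/t by ring, Real.exp_add]
                  ring
        _ = (‖f t * Real.exp ((a - s) / t) * t ^ (-(m:ℝ))‖₊ : ENNReal) := by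
            rw [← enorm_eq_nnnorm, ← ofReal_norm]
            congr 1
            rw [Real.norm_eq_abs, abs_mul, abs_mul, abs_of_pos (Real.exp_pos _),
              abs_of_pos (Real.rpow_pos_of_pos ht0 _)]
    rw [heq]
    exact hGfin.ne
  have hkey := integral_tsum hFmeas hcond
  have hL : ∫ t in Set.Ioi (0:ℝ), f t * Real.exp (-(s + a) / t) * t ^ (-(m:ℝ))
      = ∫ t in Set.Ioi (0:ℝ), ∑' k, F k t := by
    apply setIntegral_congr_fun measurableSet_Ioi
    intro t ht
    exact (hptsum t ht).symm
  rw [hL, hkey]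
  have hz : ∀ k : ℕ, ∫ t in Set.Ioi (0:ℝ), F k t = 0 := by
    intro k
    rw [hF]
    simp only
    rw [integral_const_mul, hm (m+k), mul_zero]
  simp [hz]

lemma allS {δ c : ℝ} (hδ : 0 < δ) {f : ℝ → ℝ}
    (hf : ContinuousOn f (Set.Ioi 0))
    (h1 : ∀ t : ℝ, 1 ≤ t → |f t| ≤ c * Real.exp (-δ * t))
    (h2 : ∀ t : ℝ, 0 < t → t ≤ 1 → |f t| ≤ c * Real.exp (-δ / t))
    (hmom : ∀ m : ℕ, ∫ t in Set.Ioi (0 : ℝ), f t * t ^ (-(m : ℝ)) = 0) :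
    ∀ s : ℝ, 0 ≤ s → ∀ m : ℕ,
      ∫ t in Set.Ioi (0:ℝ), f t * Real.exp (-s / t) * t ^ (-(m:ℝ)) = 0 := by
  have key : ∀ n : ℕ, ∀ m : ℕ,
      ∫ t in Set.Ioi (0:ℝ), f t * Real.exp (-((n:ℝ) * (δ/2)) / t) * t ^ (-(m:ℝ)) = 0 := by
    intro n
    induction n with
    | zero =>
      intro m
      refine Eq.trans ?_ (hmom m)
      apply setIntegral_congr_fun measurableSet_Ioi
      intro t ht
      norm_num
    | succ n ih =>
      intro m
      have h2' := seriesStep hδ hf h1 h2 ((n:ℝ)*(δ/2)) (δ/2) (by positivity) (by positivity)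
        (by linarith) ih m
      rw [show ((n:ℝ)*(δ/2) + δ/2) = (((n+1:ℕ)):ℝ)*(δ/2) by push_cast; ring] at h2'
      exact h2'
  intro s hs m
  set n := ⌊s / (δ/2)⌋₊ with hn
  have hδ2 : 0 < δ/2 := by linarith
  have hfl : (n:ℝ) * (δ/2) ≤ s := by
    rw [hn, ← le_div_iff₀ hδ2]
    exact Nat.floor_le (by positivity)
  have hub : s < ((n:ℝ)+1) * (δ/2) := by
    rw [hn, ← div_lt_iff₀ hδ2]
    exact_mod_cast Nat.lt_floor_add_one (s/(δ/2))
  have hfin := seriesStep hδ hf h1 h2 ((n:ℝ)*(δ/2)) (s - (n:ℝ)*(δ/2)) (by positivity)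
    (by linarith) (by nlinarith) (key n) m
  rw [show ((n:ℝ)*(δ/2) + (s - (n:ℝ)*(δ/2))) = s by ring] at hfin
  exact hfin

theorem stmt_10 (δ c : ℝ) (hδ : 0 < δ) (f : ℝ → ℝ)
    (hf : ContinuousOn f (Set.Ioi 0))
    (h1 : ∀ t : ℝ, 1 ≤ t → |f t| ≤ c * Real.exp (-δ * t))
    (h2 : ∀ t : ℝ, 0 < t → t ≤ 1 → |f t| ≤ c * Real.exp (-δ / t))
    (hmom : ∀ m : ℕ, ∫ t in Set.Ioi (0 : ℝ), f t * t ^ (-(m : ℝ)) = 0) :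
    ∀ t : ℝ, 0 < t → f t = 0 := by
  have hc : 0 ≤ c := by
    nlinarith [Real.exp_pos (-δ * 1), abs_nonneg (f 1), h1 1 le_rfl]
  -- exponential moments
  have hexp : ∀ n : ℕ, ∫ t in Set.Ioi (0:ℝ), f t * Real.exp (-((n:ℝ)+1) / t) = 0 := by
    intro n
    refine Eq.trans ?_ (allS hδ hf h1 h2 hmom ((n:ℝ)+1) (by positivity) 0)
    apply setIntegral_congr_fun measurableSet_Ioi
    intro t ht
    norm_num
  set H : ℝ → ℝ := fun v => f (-(Real.log v)⁻¹) * ((Real.log v)⁻¹)^2 with hH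
  set φ : ℝ → ℝ := fun t => Real.exp (-t⁻¹) with hφ
  -- basic facts about φ
  have hφmem : ∀ t : ℝ, 0 < t → φ t ∈ Set.Ioo (0:ℝ) 1 := by
    intro t ht
    constructor
    · exact Real.exp_pos _
    · rw [hφ]
      calc Real.exp (-t⁻¹) < Real.exp 0 := Real.exp_lt_exp.2 (by simp; positivity)
        _ = 1 := Real.exp_zero
  have hHφ : ∀ t : ℝ, 0 < t → H (φ t) = f t * t^2 := by
    intro t ht
    rw [hH, hφ]
    simp only [Real.log_exp, inv_neg, inv_inv, neg_neg, neg_sq]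
  have himg : φ '' Set.Ioi 0 = Set.Ioo (0:ℝ) 1 := by
    ext v
    constructor
    · rintro ⟨t, ht, rfl⟩
      exact hφmem t ht
    · rintro ⟨hv0, hv1⟩
      have hlv : Real.log v < 0 := Real.log_neg hv0 hv1
      refine ⟨-(Real.log v)⁻¹, ?_, ?_⟩
      · exact Set.mem_Ioi.2 (neg_pos.2 (inv_lt_zero.2 hlv))
      · rw [hφ]
        simp only [inv_neg, inv_inv, neg_neg]
        exact Real.exp_log hv0
  have hinj : Set.InjOn φ (Set.Ioi 0) := by
    intro t1 ht1 t2 ht2 heq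
    rw [hφ] at heq
    simp only [Real.exp_eq_exp, neg_inj] at heq
    exact inv_injective heq
  have hderiv : ∀ t ∈ Set.Ioi (0:ℝ), HasDerivWithinAt φ (Real.exp (-t⁻¹) * (t^2)⁻¹)
      (Set.Ioi 0) t := by
    intro t ht
    have hne : t ≠ 0 := ne_of_gt ht
    have hin : HasDerivAt (fun x : ℝ => -x⁻¹) ((t^2)⁻¹) t := by
      simpa using (hasDerivAt_inv hne).fun_neg
    exact ((Real.hasDerivAt_exp (-t⁻¹)).comp t hin).hasDerivWithinAt
  -- moments of H
  have Hmom : ∀ n : ℕ, ∫ v in Set.Ioo (0:ℝ) 1, H v * v ^ n = 0 := by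
    intro n
    rw [← himg, integral_image_eq_integral_abs_deriv_smul measurableSet_Ioi hderiv hinj
      (fun v => H v * v ^ n)]
    refine Eq.trans ?_ (hexp n)
    apply setIntegral_congr_fun measurableSet_Ioi
    intro t ht
    have ht0 : (0:ℝ) < t := ht
    have hexp2 : φ t ^ n = Real.exp ((n:ℝ) * (-t⁻¹)) := by
      rw [hφ, ← Real.exp_nat_mul]
    show |Real.exp (-t⁻¹) * (t ^ 2)⁻¹| • (H (φ t) * φ t ^ n)
        = f t * Real.exp (-((n:ℝ) + 1) / t)
    rw [hHφ t ht0, hexp2, smul_eq_mul,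
      abs_of_pos (mul_pos (Real.exp_pos _) (inv_pos.2 (by positivity)))]
    rw [show -((n:ℝ)+1) / t = -t⁻¹ + (n:ℝ) * (-t⁻¹) by field_simp; ring, Real.exp_add]
    field_simp
  -- boundedness
  set B : ℝ := c * (1 + 6/δ^3) with hB
  have hBnn : 0 ≤ B := by positivity
  have hfb : ∀ t : ℝ, 0 < t → |f t| * t^2 ≤ B := by
    intro t ht
    rcases le_or_gt t 1 with hle | hgt
    · have hb := h2 t ht hle
      have he : Real.exp (-δ/t) ≤ 1 := by
        rw [← Real.exp_zero]
        apply Real.exp_le_exp.2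
        rw [neg_div]
        simp only [Real.exp_zero, neg_nonpos]
        positivity
      have ht2 : t^2 ≤ 1 := by nlinarith
      have h6 : 0 ≤ c * (6/δ^3) := by positivity
      nlinarith [abs_nonneg (f t), sq_nonneg t, Real.exp_pos (-δ/t)]
    · have ht1 : (1:ℝ) ≤ t := le_of_lt hgt
      have hb := h1 t ht1
      have h3 : (δ*t)^3 ≤ 6 * Real.exp (δ*t) := by
        have := pow_le_factorial_mul_exp (δ*t) (by positivity) 3
        norm_num [Nat.factorial] at this
        linarith
      have hE : (0:ℝ) < Real.exp (δ*t) := Real.exp_pos _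
      have he2 : Real.exp (-δ*t) * t^2 ≤ 6/δ^3 := by
        rw [show -δ*t = -(δ*t) by ring, Real.exp_neg, inv_mul_le_iff₀ hE,
          mul_div_assoc', le_div_iff₀ (by positivity : (0:ℝ) < δ^3)]
        have h3' : δ^3 * t^3 ≤ 6 * Real.exp (δ*t) := by nlinarith [h3]
        nlinarith [h3', mul_nonneg (mul_nonneg (sq_nonneg t)
          (by linarith : (0:ℝ) ≤ t - 1)) (pow_pos hδ 3).le]
      have : |f t| * t^2 ≤ c * (6/δ^3) := by
        calc |f t| * t^2 ≤ (c * Real.exp (-δ*t)) * t^2 := by nlinarith [sq_nonneg t]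
          _ = c * (Real.exp (-δ*t) * t^2) := by ring
          _ ≤ c * (6/δ^3) := by nlinarith
      nlinarith
  have hHb : ∀ v ∈ Set.Ioo (0:ℝ) 1, |H v| ≤ B := by
    intro v hv
    have hlv : Real.log v < 0 := Real.log_neg hv.1 hv.2
    have htpos : 0 < -(Real.log v)⁻¹ := neg_pos.2 (inv_lt_zero.2 hlv)
    have := hfb _ htpos
    rw [hH]
    simp only
    rw [abs_mul, abs_of_nonneg (sq_nonneg ((Real.log v)⁻¹))]
    calc |f (-(Real.log v)⁻¹)| * ((Real.log v)⁻¹)^2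
        = |f (-(Real.log v)⁻¹)| * (-(Real.log v)⁻¹)^2 := by rw [neg_sq]
      _ ≤ B := this
  -- continuity of H on Ioo 0 1
  have hinner : ContinuousOn (fun v : ℝ => -(Real.log v)⁻¹) (Set.Ioo (0:ℝ) 1) := by
    intro v hv
    have hlv : Real.log v < 0 := Real.log_neg hv.1 hv.2
    exact (((Real.continuousAt_log (ne_of_gt hv.1)).inv₀
      (ne_of_lt hlv)).neg).continuousWithinAt
  have hHcont : ContinuousOn H (Set.Ioo (0:ℝ) 1) := by
    rw [hH]
    apply ContinuousOn.mul
    · refine ContinuousOn.comp hf hinner ?_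
      intro v hv
      have hlv : Real.log v < 0 := Real.log_neg hv.1 hv.2
      exact Set.mem_Ioi.2 (neg_pos.2 (inv_lt_zero.2 hlv))
    · apply ContinuousOn.pow
      intro v hv
      have hlv : Real.log v < 0 := Real.log_neg hv.1 hv.2
      exact ((Real.continuousAt_log (ne_of_gt hv.1)).inv₀
        (ne_of_lt hlv)).continuousWithinAt
  -- integrability
  have hIntMul : ∀ g : ℝ → ℝ, Continuous g →
      IntegrableOn (fun v => H v * g v) (Set.Ioo (0:ℝ) 1) := by
    intro g hg
    obtain ⟨Cg, hCg⟩ := isCompact_Icc.exists_bound_of_continuousOn (f := g)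
      (hg.continuousOn (s := Set.Icc (0:ℝ) 1))
    refine Integrable.mono' (g := fun _ => B * Cg)
      (integrableOn_const measure_Ioo_lt_top.ne) ?_ ?_
    · exact ((hHcont.aestronglyMeasurable measurableSet_Ioo).mul
        (hg.aestronglyMeasurable.restrict))
    · filter_upwards [ae_restrict_mem measurableSet_Ioo] with v hv
      have h1' := hHb v hv
      have h2' := hCg v (Set.mem_Icc_of_Ioo hv)
      rw [Real.norm_eq_abs, abs_mul]
      rw [Real.norm_eq_abs] at h2'
      exact mul_le_mul h1' h2' (abs_nonneg _) hBnn
  have hIntH : IntegrableOn H (Set.Ioo (0:ℝ) 1) := by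
    have := hIntMul (fun _ => 1) continuous_const
    simpa using this
  -- polynomial moments
  have HPoly : ∀ p : Polynomial ℝ, ∫ v in Set.Ioo (0:ℝ) 1, H v * p.eval v = 0 := by
    intro p
    have hrw : ∀ v : ℝ, H v * p.eval v
        = ∑ i ∈ Finset.range (p.natDegree + 1), p.coeff i * (H v * v ^ i) := by
      intro v
      rw [Polynomial.eval_eq_sum_range, Finset.mul_sum]
      apply Finset.sum_congr rfl
      intro i _
      ring
    rw [show (fun v => H v * p.eval v) = fun v =>
      ∑ i ∈ Finset.range (p.natDegree + 1), p.coeff i * (H v * v ^ i) from funext hrw]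
    rw [integral_finset_sum]
    · apply Finset.sum_eq_zero
      intro i _
      rw [integral_const_mul, Hmom i, mul_zero]
    · intro i _
      exact (hIntMul (fun v => v ^ i) (continuous_pow i)).const_mul _
  -- test against continuous functions
  set I : ℝ := ∫ v in Set.Ioo (0:ℝ) 1, |H v| with hI
  have hInn : 0 ≤ I := integral_nonneg (fun v => abs_nonneg _)
  have hIntAbs : IntegrableOn (fun v => |H v|) (Set.Ioo (0:ℝ) 1) := hIntH.abs
  have Htest : ∀ g : ℝ → ℝ, Continuous g → ∫ v in Set.Ioo (0:ℝ) 1, g v • H v = 0 := by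
    intro g hg
    have hle : ∀ ε : ℝ, 0 < ε → |∫ v in Set.Ioo (0:ℝ) 1, g v • H v| ≤ ε * (I + 1) := by
      intro ε hε
      obtain ⟨p, hp⟩ := exists_polynomial_near_of_continuousOn 0 1 g
        (hg.continuousOn) ε hε
      have hpz := HPoly p
      have hgi : IntegrableOn (fun v => g v • H v) (Set.Ioo (0:ℝ) 1) := by
        have := hIntMul g hg
        apply this.congr_fun ?_ measurableSet_Ioo
        intro v _; simp [mul_comm]
      have hpi := hIntMul (fun v => p.eval v) (p.continuous_aeval)
      calc |∫ v in Set.Ioo (0:ℝ) 1, g v • H v|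
          = |∫ v in Set.Ioo (0:ℝ) 1, (g v • H v - H v * p.eval v)| := by
            rw [integral_sub hgi hpi, hpz, sub_zero]
        _ ≤ ∫ v in Set.Ioo (0:ℝ) 1, ε * |H v| := by
            rw [← Real.norm_eq_abs]
            apply norm_integral_le_of_norm_le (hIntAbs.const_mul ε)
            filter_upwards [ae_restrict_mem measurableSet_Ioo] with v hv
            have hpv := hp v (Set.mem_Icc_of_Ioo hv)
            rw [smul_eq_mul, show g v * H v - H v * p.eval v = (g v - p.eval v) * H v by ring,
              Real.norm_eq_abs, abs_mul]
            have : |g v - p.eval v| ≤ ε := by rw [abs_sub_comm]; exact le_of_lt hpv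
            nlinarith [abs_nonneg (H v), abs_nonneg (g v - p.eval v)]
        _ = ε * I := by rw [integral_const_mul]
        _ ≤ ε * (I + 1) := by nlinarith
    by_contra hne
    have habs : 0 < |∫ v in Set.Ioo (0:ℝ) 1, g v • H v| := abs_pos.2 hne
    have hIpos : (0:ℝ) < I + 1 := by linarith
    have := hle (|∫ v in Set.Ioo (0:ℝ) 1, g v • H v| / (2 * (I + 1))) (by positivity)
    have heq2 : (|∫ v in Set.Ioo (0:ℝ) 1, g v • H v| / (2 * (I + 1))) * (I + 1)
        = |∫ v in Set.Ioo (0:ℝ) 1, g v • H v| / 2 := by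
      field_simp
    rw [heq2] at this
    linarith
  -- conclude H = 0 on Ioo 0 1
  have hae : ∀ᵐ v ∂(volume.restrict (Set.Ioo (0:ℝ) 1)), H v = 0 := by
    apply ae_eq_zero_of_integral_contDiff_smul_eq_zero
    · exact hIntH.locallyIntegrable
    · intro g hg _
      exact Htest g hg.continuous
  have hHzero : ∀ v ∈ Set.Ioo (0:ℝ) 1, H v = 0 := by
    have hU : IsOpen (Set.Ioo (0:ℝ) 1 ∩ H ⁻¹' ({0}ᶜ)) :=
      hHcont.isOpen_inter_preimage isOpen_Ioo isOpen_compl_singleton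
    have hmeas0 : volume (Set.Ioo (0:ℝ) 1 ∩ H ⁻¹' ({0}ᶜ)) = 0 := by
      rw [ae_iff] at hae
      rw [Measure.restrict_apply' measurableSet_Ioo] at hae
      rw [show Set.Ioo (0:ℝ) 1 ∩ H ⁻¹' ({0}ᶜ) = {v | ¬ H v = 0} ∩ Set.Ioo (0:ℝ) 1 by
        ext v; simp [Set.mem_inter_iff, and_comm]]
      exact hae
    have hempty := hU.eq_empty_of_measure_zero hmeas0
    intro v hv
    by_contra hne
    have : v ∈ Set.Ioo (0:ℝ) 1 ∩ H ⁻¹' ({0}ᶜ) := ⟨hv, hne⟩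
    rw [hempty] at this
    exact this
  -- finish
  intro t ht
  have hmem := hφmem t ht
  have := hHzero (φ t) hmem
  rw [hHφ t ht] at this
  have ht2 : t^2 ≠ 0 := by positivity
  exact (mul_eq_zero.1 this).resolve_right ht2
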